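/- The operator ∇_n lowers the Krawtchouk index: for every r ∈ {0,...,n}, ∇_n φ_r = (r(n-r+1)/(n(1-t)))·φ_{r-1}, with the convention φ_{-1} = 0. -/

import Mathlib

open Finset Polynomial

/-- `∇_n` lowers the Krawtchouk index:
`∇_n φ_r = (r(n-r+1)/(n(1-t)))·φ_{r-1}` (with `φ_{-1} = 0`; at `r = 0` the coefficient
vanishes, and at `k = 0` resp. `k = n` the coefficients of `φ_r(k-1)` resp. `φ_r(k+1)`
vanish, so the conventions are immaterial). -/
theorem stmt12 (n : ℕ) (hn : 1 ≤ n) (t : ℝ) (ht : t ∈ Set.Ioo (0 : ℝ) 1)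
    (φ : ℕ → ℕ → ℝ)
    (hφ : ∀ k ≤ n, ∀ w : ℝ,
      ∑ r ∈ range (n + 1), (1 - t) ^ r / (Nat.factorial r : ℝ) * φ r k * w ^ r
        = (1 + (1 - t) * w) ^ k * (1 - t * w) ^ (n - k))
    (r : ℕ) (hr : r ≤ n) (k : ℕ) (hk : k ≤ n) :
    (k : ℝ) / n * (φ r k - φ r (k - 1)) + ((n : ℝ) - k) / n * (φ r (k + 1) - φ r k)
      = (r : ℝ) * ((n : ℝ) - r + 1) / (n * (1 - t)) * φ (r - 1) k := by
  obtain ⟨ht0, ht1⟩ := ht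
  have h1t : (0:ℝ) < 1 - t := by linarith
  set A : Polynomial ℝ := Polynomial.C 1 + Polynomial.C (1-t) * Polynomial.X with hA
  set B : Polynomial ℝ := Polynomial.C 1 - Polynomial.C t * Polynomial.X with hB
  set G : ℕ → Polynomial ℝ := fun j => A ^ j * B ^ (n - j) with hG
  -- coefficients of G j are the φ's
  have hg : ∀ j ≤ n, ∀ s ≤ n, (G j).coeff s = (1-t)^s / (Nat.factorial s : ℝ) * φ s j := by
    intro j hj s hs
    have hQ : (∑ i ∈ range (n+1), Polynomial.C ((1-t)^i / (Nat.factorial i : ℝ) * φ i j) * Polynomial.X ^ i) = G j := by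
      apply Polynomial.funext
      intro w
      have := hφ j hj w
      simp only [eval_finset_sum, eval_mul, eval_pow, eval_C, eval_X, hG, hA, hB,
        eval_add, eval_sub, eval_one]
      simpa using this
    rw [← hQ, Polynomial.finset_sum_coeff, Finset.sum_eq_single s]
    · rw [coeff_C_mul, coeff_X_pow]
      simp
    · intro b _ hbs
      rw [coeff_C_mul, coeff_X_pow]
      simp [Ne.symm hbs]
    · intro hsn
      exact absurd (mem_range.mpr (Nat.lt_succ_of_le hs)) hsn
  have hc : Polynomial.C (1-t) = 1 - Polynomial.C t := by rw [map_sub, map_one]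
  have hdA : derivative A = Polynomial.C (1-t) := by simp [hA]
  have hdB : derivative B = -Polynomial.C t := by simp [hB]
  -- the polynomial identity
  have hP : ∀ j ≤ n,
      Polynomial.C (j:ℝ) * (G j - G (j-1)) + Polynomial.C ((n:ℝ)-j) * (G (j+1) - G j)
        = Polynomial.C (n:ℝ) * (Polynomial.X * G j) - Polynomial.X^2 * derivative (G j) := by
    intro j hj
    rcases Nat.eq_zero_or_pos j with h0 | hjpos
    · subst h0
      obtain ⟨m, rfl⟩ : ∃ m, n = m + 1 := ⟨n - 1, by omega⟩
      have g0 : G 0 = B ^ (m+1) := by simp [hG]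
      have g1 : G 1 = A * B ^ m := by
        have : m + 1 - 1 = m := by omega
        simp [hG, this]
      have gm : G (0-1) = B ^ (m+1) := by simp [hG]
      have gd : derivative (G 0) = Polynomial.C ((m:ℝ)+1) * B ^ m * (-Polynomial.C t) := by
        rw [g0, derivative_pow, hdB]
        push_cast
        simp only [Nat.add_sub_cancel]
      rw [gd, g0, g1]
      push_cast
      simp only [hA, hB, hc, map_add, map_sub, map_one, map_zero, Nat.cast_zero, sub_zero]
      ring
    · rcases eq_or_lt_of_le hj with h1 | hjlt
      · subst h1
        obtain ⟨m, rfl⟩ : ∃ m, j = m + 1 := ⟨j - 1, by omega⟩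
        have g0 : G (m+1) = A ^ (m+1) := by simp [hG]
        have gm : G (m+1-1) = A ^ m * B := by
          have e : m + 1 - 1 = m := by omega
          have e2 : m + 1 - m = 1 := by omega
          simp [hG, e, e2]
        have gp : G (m+1+1) = A ^ (m+2) := by
          have e : m + 1 - (m+1+1) = 0 := by omega
          have e' : m + 1 + 1 = m + 2 := by omega
          simp [hG, e, e']
        have gd : derivative (G (m+1)) = Polynomial.C ((m:ℝ)+1) * A ^ m * Polynomial.C (1-t) := by
          rw [g0, derivative_pow, hdA]
          push_cast
          simp only [Nat.add_sub_cancel]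
        rw [gd, g0, gm, gp]
        have e0 : ((m:ℝ)+1) - ((m:ℝ)+1) = 0 := by ring
        push_cast
        rw [e0]
        simp only [hA, hB, hc, map_add, map_sub, map_one, map_zero, zero_mul, add_zero]
        ring
      · -- 0 < j < n
        obtain ⟨a, rfl⟩ : ∃ a, j = a + 1 := ⟨j - 1, by omega⟩
        obtain ⟨b, hb⟩ : ∃ b, n = a + 1 + (b + 1) := ⟨n - a - 2, by omega⟩
        have e1 : n - (a + 1) = b + 1 := by omega
        have e2 : n - a = b + 2 := by omega
        have e3 : n - (a + 1 + 1) = b := by omega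
        have g0 : G (a+1) = A ^ (a+1) * B ^ (b+1) := by simp [hG, e1]
        have gm : G (a+1-1) = A ^ a * B ^ (b+2) := by
          have e : a + 1 - 1 = a := by omega
          simp [hG, e, e2]
        have gp : G (a+1+1) = A ^ (a+2) * B ^ b := by
          have e : a + 1 + 1 = a + 2 := by omega
          simp [hG, e3, e]
        have gd : derivative (G (a+1)) =
            (Polynomial.C ((a:ℝ)+1) * A ^ a * Polynomial.C (1-t)) * B ^ (b+1)
            + A ^ (a+1) * (Polynomial.C ((b:ℝ)+1) * B ^ b * (-Polynomial.C t)) := by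
          rw [g0, derivative_mul, derivative_pow, derivative_pow, hdA, hdB]
          push_cast
          simp only [Nat.add_sub_cancel]
        rw [gd, g0, gm, gp]
        have en : (n:ℝ) = (a:ℝ) + 1 + ((b:ℝ) + 1) := by rw [hb]; push_cast; ring
        rw [en]
        push_cast
        simp only [hA, hB, hc, map_add, map_sub, map_one]
        ring
  -- assembly
  have hn' : (n:ℝ) ≠ 0 := Nat.cast_ne_zero.mpr (by omega)
  have hv : (1:ℝ) - t ≠ 0 := ne_of_gt h1t
  have hphi : ∀ j ≤ n, ∀ s ≤ n, φ s j = (Nat.factorial s : ℝ) / (1-t)^s * (G j).coeff s := by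
    intro j hj s hs
    rw [hg j hj s hs]
    have hf : (Nat.factorial s : ℝ) ≠ 0 := Nat.cast_ne_zero.mpr (Nat.factorial_ne_zero s)
    field_simp
  have hCoef := congrArg (fun p => p.coeff r) (hP k hk)
  simp only [coeff_add, coeff_sub, coeff_C_mul] at hCoef
  rcases Nat.eq_zero_or_pos r with hr0 | hrpos
  · subst hr0
    have hR0 : (Polynomial.X * G k).coeff 0 = 0 := by simp [Polynomial.mul_coeff_zero]
    have hR1 : (Polynomial.X^2 * derivative (G k)).coeff 0 = 0 := by
      simp [Polynomial.mul_coeff_zero, Polynomial.coeff_X_pow]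
    rw [hR0, hR1] at hCoef
    simp only [Nat.cast_zero, zero_mul, zero_div, zero_add, mul_zero, sub_zero] at hCoef ⊢
    rcases eq_or_lt_of_le hk with hkn | hkn
    · have hz : (n:ℝ) - (k:ℕ) = 0 := by rw [hkn]; simp
      rw [hz, zero_mul, add_zero] at hCoef
      rw [hz, zero_div, zero_mul, add_zero]
      rw [hphi k hk 0 (by omega), hphi (k-1) (by omega) 0 (by omega)]
      simp only [Nat.factorial_zero, Nat.cast_one, pow_zero]
      linear_combination hCoef / (n:ℝ)
    · rw [hphi k hk 0 (by omega), hphi (k-1) (by omega) 0 (by omega),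
        hphi (k+1) (by omega) 0 (by omega)]
      simp only [Nat.factorial_zero, Nat.cast_one, pow_zero]
      linear_combination hCoef / (n:ℝ)
  · obtain ⟨s, rfl⟩ : ∃ s, r = s + 1 := ⟨r - 1, by omega⟩
    have hs : s ≤ n := by omega
    have hX : (Polynomial.X * G k).coeff (s+1) = (G k).coeff s := Polynomial.coeff_X_mul _ _
    have hX2 : (Polynomial.X^2 * derivative (G k)).coeff (s+1) = (s:ℝ) * (G k).coeff s := by
      rcases Nat.eq_zero_or_pos s with h0 | hspos
      · subst h0
        rw [pow_two, mul_assoc]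
        rw [show (0:ℕ)+1 = 0+1 from rfl, Polynomial.coeff_X_mul]
        simp [Polynomial.mul_coeff_zero]
      · obtain ⟨u, rfl⟩ : ∃ u, s = u + 1 := ⟨s - 1, by omega⟩
        rw [show u + 1 + 1 = u + 2 from rfl, Polynomial.coeff_X_pow_mul]
        rw [Polynomial.coeff_derivative]
        push_cast
        ring
    rw [hX, hX2] at hCoef
    have hsub : s + 1 - 1 = s := by omega
    rw [hsub]
    rcases eq_or_lt_of_le hk with hkn | hkn
    · have hz : (n:ℝ) - (k:ℕ) = 0 := by rw [hkn]; simp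
      rw [hz, zero_mul, add_zero] at hCoef
      rw [hz, zero_div, zero_mul, add_zero]
      rw [hphi k hk (s+1) hr, hphi (k-1) (by omega) (s+1) hr, hphi k hk s hs]
      push_cast [Nat.factorial_succ]
      have hf : (Nat.factorial s : ℝ) ≠ 0 := Nat.cast_ne_zero.mpr (Nat.factorial_ne_zero s)
      field_simp
      linear_combination ((1-t) * (1-t)^s) * hCoef
    · rw [hphi k hk (s+1) hr, hphi (k-1) (by omega) (s+1) hr,
        hphi (k+1) (by omega) (s+1) hr, hphi k hk s hs]
      push_cast [Nat.factorial_succ]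
      have hf : (Nat.factorial s : ℝ) ≠ 0 := Nat.cast_ne_zero.mpr (Nat.factorial_ne_zero s)
      field_simp
      linear_combination ((1-t) * (1-t)^s) * hCoef
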